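/- If (X_1, ..., X_n) is an n-dimensional random vector with finite variances such that Cov(X_i, X_j) ≤ 0 for all i ≠ j (NCD), and X_1 + ... + X_n is almost surely constant (joint mix), then 2·max_i Var(X_i) ≤ ∑_i Var(X_i). -/

import Mathlib

open MeasureTheory ProbabilityTheory

/-- Covariance of two real random variables. -/
noncomputable def cov {Ω : Type*} [MeasurableSpace Ω] (P : Measure Ω) (X Y : Ω → ℝ) : ℝ :=
  ∫ ω, (X ω - ∫ x, X x ∂P) * (Y ω - ∫ x, Y x ∂P) ∂P

lemma abs_mul_abs_le_half_sq_add_sq (a b : ℝ) : |a| * |b| ≤ (a ^ 2 + b ^ 2) / 2 := by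
  nlinarith [sq_nonneg (|a| - |b|), sq_abs a, sq_abs b]

/-- An NCD joint mix with finite variances satisfies `2 max_i Var(X_i) ≤ ∑_i Var(X_i)`. -/
theorem stmt0 {Ω : Type*} [MeasurableSpace Ω] (P : Measure Ω) [IsProbabilityMeasure P]
    {n : ℕ} (X : Fin n → Ω → ℝ) (hmeas : ∀ i, Measurable (X i))
    (hL2 : ∀ i, MemLp (X i) 2 P)
    (hNCD : ∀ i j, i ≠ j → cov P (X i) (X j) ≤ 0)
    (hJM : ∃ c : ℝ, ∀ᵐ ω ∂P, ∑ i, X i ω = c) :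
    ∀ i, 2 * variance (X i) P ≤ ∑ j, variance (X j) P := by
  intro i
  set m : Fin n → ℝ := fun j => ∫ x, X j x ∂P with hm
  set Y : Fin n → Ω → ℝ := fun j ω => X j ω - m j with hYdef
  have hYL2 : ∀ j, MemLp (Y j) 2 P := fun j => (hL2 j).sub (memLp_const (m j))
  have hYsq : ∀ j, Integrable (fun ω => Y j ω ^ 2) P := fun j => (hYL2 j).integrable_sq
  have hYint : ∀ j k, Integrable (fun ω => Y j ω * Y k ω) P := by
    intro j k
    refine Integrable.mono' (((hYsq j).add (hYsq k)).div_const 2)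
      ((hYL2 j).aestronglyMeasurable.mul (hYL2 k).aestronglyMeasurable)
      (ae_of_all _ fun ω => ?_)
    have h3 : |Y j ω| * |Y k ω| ≤ (Y j ω ^ 2 + Y k ω ^ 2) / 2 :=
      abs_mul_abs_le_half_sq_add_sq _ _
    simp only [Real.norm_eq_abs, Pi.add_apply, abs_mul]
    exact h3.trans_eq (by ring)
  obtain ⟨c, hc⟩ := hJM
  have hXint : ∀ j, Integrable (X j) P := fun j => (hL2 j).integrable one_le_two
  have hsum_m : ∑ j, m j = c := by
    have h1 : ∫ ω, (∑ j, X j ω) ∂P = ∑ j, m j :=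
      integral_finset_sum _ (fun j _ => hXint j)
    have h2 : ∫ ω, (∑ j, X j ω) ∂P = c := by
      rw [integral_congr_ae hc]; simp
    linarith
  have hYi : ∀ᵐ ω ∂P, Y i ω = -∑ j ∈ Finset.univ.erase i, Y j ω := by
    filter_upwards [hc] with ω hω
    have h1 : Y i ω + ∑ j ∈ Finset.univ.erase i, Y j ω = ∑ j, Y j ω :=
      Finset.add_sum_erase Finset.univ (fun j => Y j ω) (Finset.mem_univ i)
    have h2 : ∑ j, Y j ω = 0 := by
      simp only [hYdef, Finset.sum_sub_distrib, hω, hsum_m, sub_self]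
    linarith
  have hvar : ∀ j, variance (X j) P = ∫ ω, Y j ω ^ 2 ∂P := by
    intro j
    rw [variance_eq_integral (hL2 j).aemeasurable]
  have hcov : ∀ j k, cov P (X j) (X k) = ∫ ω, Y j ω * Y k ω ∂P := fun j k => rfl
  have key : variance (X i) P ≤ ∑ j ∈ Finset.univ.erase i, variance (X j) P := by
    have h1 : ∫ ω, Y i ω ^ 2 ∂P
        = ∫ ω, (∑ j ∈ Finset.univ.erase i, Y j ω) ^ 2 ∂P := by
      apply integral_congr_ae
      filter_upwards [hYi] with ω hω
      rw [hω]; ring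
    have h2 : ∫ ω, (∑ j ∈ Finset.univ.erase i, Y j ω) ^ 2 ∂P
        = ∑ j ∈ Finset.univ.erase i, ∑ k ∈ Finset.univ.erase i,
            ∫ ω, Y j ω * Y k ω ∂P := by
      have hexp : ∀ ω, (∑ j ∈ Finset.univ.erase i, Y j ω) ^ 2
          = ∑ j ∈ Finset.univ.erase i, ∑ k ∈ Finset.univ.erase i, Y j ω * Y k ω := by
        intro ω
        rw [sq, Finset.sum_mul_sum]
      simp_rw [hexp]
      rw [integral_finset_sum _ (fun j _ => integrable_finset_sum _ (fun k _ => hYint j k))]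
      exact Finset.sum_congr rfl fun j _ =>
        integral_finset_sum _ (fun k _ => hYint j k)
    have h3 : ∀ j ∈ Finset.univ.erase i,
        ∑ k ∈ Finset.univ.erase i, ∫ ω, Y j ω * Y k ω ∂P ≤ variance (X j) P := by
      intro j hj
      have hsplit : (∫ ω, Y j ω * Y j ω ∂P)
          + ∑ k ∈ (Finset.univ.erase i).erase j, ∫ ω, Y j ω * Y k ω ∂P
          = ∑ k ∈ Finset.univ.erase i, ∫ ω, Y j ω * Y k ω ∂P :=
        Finset.add_sum_erase _ (fun k => ∫ ω, Y j ω * Y k ω ∂P) hj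
      have hcross : ∑ k ∈ (Finset.univ.erase i).erase j, ∫ ω, Y j ω * Y k ω ∂P ≤ 0 := by
        apply Finset.sum_nonpos
        intro k hk
        have hjk : j ≠ k := (Finset.ne_of_mem_erase hk).symm
        have := hNCD j k hjk
        rwa [hcov j k] at this
      have hdiag : (∫ ω, Y j ω * Y j ω ∂P) = variance (X j) P := by
        rw [hvar j]
        exact integral_congr_ae (ae_of_all _ fun ω => (pow_two (Y j ω)).symm)
      linarith [hsplit, hcross, hdiag]
    calc variance (X i) P = ∑ j ∈ Finset.univ.erase i, ∑ k ∈ Finset.univ.erase i,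
            ∫ ω, Y j ω * Y k ω ∂P := by rw [hvar i, h1, h2]
      _ ≤ ∑ j ∈ Finset.univ.erase i, variance (X j) P := Finset.sum_le_sum h3
  have hsplit : variance (X i) P + ∑ j ∈ Finset.univ.erase i, variance (X j) P
      = ∑ j, variance (X j) P :=
    Finset.add_sum_erase _ (fun j => variance (X j) P) (Finset.mem_univ i)
  linarith
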